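/- Define the residual T(A,B) = B³·[x(1+A/B)(A/B)' + (αx−β)(A/B) + αx] = x(A+B)(BA'−AB') + B((αx−β)AB + αxB²) for polynomials A, B with B(0)=1. If A has degree ≤ n, B has degree ≤ n, A(0)=0, and T(A,B) ≡ 0 mod x^{2n+1}, then the rational function A/B agrees with any formal power series solution y of x(1+y)y' + (αx−β)y + αx = 0, y(0)=0, through order x^{2n} (assuming β ∉ {1,…,2n} so the series solution is unique). -/

import Mathlib

open Polynomial PowerSeries

theorem pade_derivativeFun_coe (f : ℝ[X]) :
    (f : ℝ⟦X⟧).derivativeFun = ((derivative f : ℝ[X]) : ℝ⟦X⟧) :=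
  PowerSeries.derivative_coe f

theorem pade_coeff_derivativeFun (f : ℝ⟦X⟧) (n : ℕ) :
    PowerSeries.coeff n f.derivativeFun = PowerSeries.coeff (n + 1) f * (n + 1) :=
  PowerSeries.coeff_derivative f n

/-- If `A, B` are polynomials of degree `≤ n` with `A(0) = 0`, `B(0) = 1` and the residual
`T(A,B) = x(A+B)(BA'−AB') + B((αx−β)AB + αxB²)` vanishes through order `x^{2n}`, then the
rational function `A/B` agrees with any formal power series solution `y` of
`x(1+y)y' + (αx−β)y + αx = 0`, `y(0)=0`, through order `x^{2n}` (with `β` not a positive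
integer `≤ 2n`). -/
theorem pade_agreement (α β : ℝ) (n : ℕ)
    (hβ : ∀ j : ℕ, 1 ≤ j → j ≤ 2 * n → β ≠ (j : ℝ))
    (y : PowerSeries ℝ) (hy0 : PowerSeries.constantCoeff y = 0)
    (hode : PowerSeries.X * (1 + y) * y.derivativeFun
        + (PowerSeries.C α * PowerSeries.X - PowerSeries.C β) * y
        + PowerSeries.C α * PowerSeries.X = 0)
    (A B : ℝ[X]) (hAdeg : A.degree ≤ (n : ℕ∞)) (hBdeg : B.degree ≤ (n : ℕ∞))
    (hA0 : A.coeff 0 = 0) (hB0 : B.coeff 0 = 1)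
    (hT : (X : ℝ[X]) ^ (2 * n + 1) ∣
      Polynomial.X * (A + B) * (B * derivative A - A * derivative B)
        + B * ((Polynomial.C α * Polynomial.X - Polynomial.C β) * (A * B)
          + Polynomial.C α * Polynomial.X * B ^ 2)) :
    ∀ k : ℕ, k ≤ 2 * n →
      PowerSeries.coeff k ((A : PowerSeries ℝ) * (B : PowerSeries ℝ)⁻¹)
        = PowerSeries.coeff k y := by
  set a : ℝ⟦X⟧ := (A : ℝ⟦X⟧) with ha
  set b : ℝ⟦X⟧ := (B : ℝ⟦X⟧) with hb
  have ha0 : PowerSeries.constantCoeff a = 0 := by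
    rw [ha, ← PowerSeries.coeff_zero_eq_constantCoeff_apply, Polynomial.coeff_coe, hA0]
  have hbc0 : PowerSeries.constantCoeff b ≠ 0 := by
    rw [hb, ← PowerSeries.coeff_zero_eq_constantCoeff_apply, Polynomial.coeff_coe, hB0]
    norm_num
  have hbinv : b * b⁻¹ = 1 := PowerSeries.mul_inv_cancel b hbc0
  set z : ℝ⟦X⟧ := a * b⁻¹ with hz
  have hzb : z * b = a := by
    rw [hz, mul_assoc, mul_comm b⁻¹ b, hbinv, mul_one]
  have hz0 : PowerSeries.constantCoeff z = 0 := by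
    have h1 : PowerSeries.constantCoeff z * PowerSeries.constantCoeff b = 0 := by
      rw [← map_mul, hzb, ha0]
    rcases mul_eq_zero.mp h1 with h | h
    · exact h
    · exact absurd h hbc0
  -- derivative of a via z
  have hda : (↑(derivative A) : ℝ⟦X⟧) = z * b.derivativeFun + b * z.derivativeFun := by
    have h1 : (↑(derivative A) : ℝ⟦X⟧) = PowerSeries.derivativeFun a := by
      rw [ha, pade_derivativeFun_coe]
    rw [h1, ← hzb, PowerSeries.derivativeFun_mul]
    simp only [smul_eq_mul]
  -- the residual as a power series equals b^3 * F(z)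
  set Fz : ℝ⟦X⟧ := PowerSeries.X * (1 + z) * z.derivativeFun
      + (PowerSeries.C α * PowerSeries.X - PowerSeries.C β) * z
      + PowerSeries.C α * PowerSeries.X with hFz
  have hkey : ((Polynomial.X * (A + B) * (B * derivative A - A * derivative B)
        + B * ((Polynomial.C α * Polynomial.X - Polynomial.C β) * (A * B)
          + Polynomial.C α * Polynomial.X * B ^ 2) : ℝ[X]) : ℝ⟦X⟧)
      = Fz * b ^ 3 := by
    have hdb : (↑(derivative B) : ℝ⟦X⟧) = b.derivativeFun := by
      rw [hb, pade_derivativeFun_coe]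
    push_cast [Polynomial.coe_add, Polynomial.coe_mul, Polynomial.coe_sub, Polynomial.coe_pow,
      Polynomial.coe_X, Polynomial.coe_C]
    rw [← ha, ← hb, hda, hdb, ← hzb, hFz]
    ring
  -- divisibility of Fz by X^(2n+1)
  have hdvd : (PowerSeries.X : ℝ⟦X⟧) ^ (2 * n + 1) ∣ Fz := by
    have h1 : (PowerSeries.X : ℝ⟦X⟧) ^ (2 * n + 1) ∣ Fz * b ^ 3 := by
      rw [← hkey]
      obtain ⟨q, hq⟩ := hT
      refine ⟨(q : ℝ⟦X⟧), ?_⟩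
      rw [hq]
      push_cast [Polynomial.coe_mul, Polynomial.coe_pow, Polynomial.coe_X]
      ring
    have h2 : Fz = Fz * b ^ 3 * (b⁻¹) ^ 3 := by
      rw [mul_assoc, ← mul_pow, hbinv, one_pow, mul_one]
    rw [h2]
    exact Dvd.dvd.mul_right h1 _
  have hFzcoeff : ∀ k : ℕ, k ≤ 2 * n → PowerSeries.coeff k Fz = 0 := by
    intro k hk
    exact PowerSeries.X_pow_dvd_iff.mp hdvd k (Nat.lt_succ_of_le hk)
  -- main induction
  intro k hk
  induction k using Nat.strong_induction_on with
  | _ k IH =>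
    match k with
    | 0 =>
      simp [PowerSeries.coeff_zero_eq_constantCoeff_apply, hz0, hy0]
    | m + 1 =>
      have hm : m + 1 ≤ 2 * n := hk
      -- coefficient of Fz at m+1
      have hcz := hFzcoeff (m + 1) hm
      have hcy : PowerSeries.coeff (m + 1)
          (PowerSeries.X * (1 + y) * y.derivativeFun
            + (PowerSeries.C α * PowerSeries.X - PowerSeries.C β) * y
            + PowerSeries.C α * PowerSeries.X) = 0 := by rw [hode]; simp
      -- expand both
      have expand : ∀ u : ℝ⟦X⟧, PowerSeries.coeff (m + 1)
          (PowerSeries.X * (1 + u) * u.derivativeFun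
            + (PowerSeries.C α * PowerSeries.X - PowerSeries.C β) * u
            + PowerSeries.C α * PowerSeries.X)
          = PowerSeries.coeff m u.derivativeFun
            + PowerSeries.coeff m (u * u.derivativeFun)
            + α * PowerSeries.coeff m u - β * PowerSeries.coeff (m + 1) u
            + α * PowerSeries.coeff m (1 : ℝ⟦X⟧) := by
        intro u
        have e : PowerSeries.X * (1 + u) * u.derivativeFun
            + (PowerSeries.C α * PowerSeries.X - PowerSeries.C β) * u
            + PowerSeries.C α * PowerSeries.X
            = PowerSeries.X * (u.derivativeFun + u * u.derivativeFun)
              + (PowerSeries.C α * (PowerSeries.X * u) - PowerSeries.C β * u)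
              + PowerSeries.C α * (PowerSeries.X * 1) := by ring
        rw [e]
        simp only [map_add, map_sub, PowerSeries.coeff_succ_X_mul, PowerSeries.coeff_C_mul]
        ring
      rw [hFz] at hcz
      rw [expand z] at hcz
      rw [expand y] at hcy
      -- products agree
      have hprod : PowerSeries.coeff m (z * z.derivativeFun)
          = PowerSeries.coeff m (y * y.derivativeFun) := by
        rw [PowerSeries.coeff_mul, PowerSeries.coeff_mul]
        apply Finset.sum_congr rfl
        intro p hp
        rw [Finset.HasAntidiagonal.mem_antidiagonal] at hp
        rcases Nat.eq_zero_or_pos p.1 with h0 | hpos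
        · rw [h0]
          simp [PowerSeries.coeff_zero_eq_constantCoeff_apply, hz0, hy0]
        · have h1 : p.1 ≤ m + 1 := by omega
          have h2 : p.2 + 1 ≤ m := by omega
          have ih1 : PowerSeries.coeff p.1 z = PowerSeries.coeff p.1 y :=
            IH p.1 (by omega) (by omega)
          have ih2 : PowerSeries.coeff (p.2 + 1) z = PowerSeries.coeff (p.2 + 1) y :=
            IH (p.2 + 1) (by omega) (by omega)
          rw [pade_coeff_derivativeFun, pade_coeff_derivativeFun, ih1, ih2]
      have ihm : PowerSeries.coeff m z = PowerSeries.coeff m y := IH m (by omega) (by omega)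
      simp only [pade_coeff_derivativeFun] at hcz hcy
      have hne : ((m : ℝ) + 1) - β ≠ 0 := by
        have h := hβ (m + 1) (by omega) hm
        intro h0
        apply h
        push_cast
        linarith
      have hkey2 : (PowerSeries.coeff (m + 1) z - PowerSeries.coeff (m + 1) y)
          * (((m : ℝ) + 1) - β) = 0 := by
        push_cast at hcz hcy ⊢
        linear_combination hcz - hcy - hprod - α * ihm
      rcases mul_eq_zero.mp hkey2 with h | h
      · linarith [sub_eq_zero.mp h]
      · exact absurd h hne
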